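/- The one-point compactification of the ordinal interval [0,ω₁) (that is, the space [0,ω₁]) is not Eberlein compact: it is not homeomorphic to any weakly compact subset of a Banach space. -/

import Mathlib

open Set

noncomputable section

/-- The first uncountable ordinal ω₁. -/
def omega1 : Ordinal := (Cardinal.aleph 1).ord

/-- The compact ordinal interval [0,ω₁], with the order topology. -/
abbrev Omega1' : Type _ := ↥(Set.Iic omega1)

section Aux

variable {X : Type*} [NormedAddCommGroup X] [NormedSpace ℝ X]

theorem weakspace_eval_continuous (f : X →L[ℝ] ℝ) :
    Continuous fun y : WeakSpace ℝ X => f y := WeakBilin.eval_continuous _ f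

theorem weakdual_apply_continuous (x : X) :
    Continuous fun w : WeakDual ℝ X => w x := WeakBilin.eval_continuous _ x

theorem opnorm_smul (c : ℝ) (f : X →L[ℝ] ℝ) : ‖c • f‖ = ‖c‖ * ‖f‖ := norm_smul c f

theorem weakspace_inj :
    Function.Injective (fun (x : WeakSpace ℝ X) (f : X →L[ℝ] ℝ) => f x) := by
  intro x y h
  by_contra hne
  have hne' : (show X from x) ≠ (show X from y) := hne
  obtain ⟨f, hf⟩ := SeparatingDual.exists_separating_of_ne (R := ℝ) hne'
  exact hf (congrFun h f)

instance : T2Space (WeakSpace ℝ X) :=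
  (Topology.IsEmbedding.mk ⟨rfl⟩ weakspace_inj).t2Space

/-- A point is in the weak closure of a set provided every basic weak
neighbourhood (finitely many functionals, one ε) meets the set. -/
theorem mem_closure_weak {T : Set (WeakSpace ℝ X)} {y : WeakSpace ℝ X}
    (H : ∀ (I : Finset (X →L[ℝ] ℝ)) (ε : ℝ), 0 < ε →
      ∃ t ∈ T, ∀ f ∈ I, |f t - f y| < ε) : y ∈ closure T := by
  set ι := fun (x : WeakSpace ℝ X) (f : X →L[ℝ] ℝ) => f x with hι
  have hind : Topology.IsInducing ι := ⟨rfl⟩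
  rw [hind.closure_eq_preimage_closure_image, mem_preimage, mem_closure_iff]
  intro V hV hyV
  obtain ⟨I, u, h1, h2⟩ := isOpen_pi_iff.mp hV (ι y) hyV
  have hε : ∀ f : X →L[ℝ] ℝ, ∃ e : ℝ, 0 < e ∧
      (f ∈ I → Metric.ball (ι y f) e ⊆ u f) := by
    intro f
    by_cases hf : f ∈ I
    · obtain ⟨e, he, hsub⟩ := Metric.isOpen_iff.mp (h1 f hf).1 (ι y f) (h1 f hf).2
      exact ⟨e, he, fun _ => hsub⟩
    · exact ⟨1, one_pos, fun h => absurd h hf⟩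
  choose e he1 he2 using hε
  obtain ⟨ε₀, hε₀, hle⟩ : ∃ ε₀ > 0, ∀ f ∈ I, ε₀ ≤ e f := by
    rcases I.eq_empty_or_nonempty with rfl | hI
    · exact ⟨1, one_pos, by simp⟩
    · refine ⟨I.inf' hI e, ?_, fun f hf => Finset.inf'_le _ hf⟩
      exact (Finset.lt_inf'_iff hI).mpr fun f _ => he1 f
  obtain ⟨t, htT, ht⟩ := H I ε₀ hε₀
  refine ⟨ι t, ?_, ⟨t, htT, rfl⟩⟩
  apply h2
  intro f hf
  apply he2 f hf
  rw [Metric.mem_ball, Real.dist_eq]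
  exact lt_of_lt_of_le (ht f hf) (hle f hf)

/-- Kaplansky's theorem: the weak topology of a normed space has countable
tightness.  Proved via Banach–Alaoglu and compactness of finite powers of the
dual ball. -/
theorem weak_countable_tightness {A : Set (WeakSpace ℝ X)} {p : WeakSpace ℝ X}
    (hp : p ∈ closure A) :
    ∃ A₀ ⊆ A, A₀.Countable ∧ p ∈ closure A₀ := by
  classical
  set Zset : Set (WeakDual ℝ X) := WeakDual.toStrongDual ⁻¹' Metric.closedBall 0 1 with hZdef
  have hZ : IsCompact Zset := WeakDual.isCompact_closedBall 0 1
  have hcont : ∀ (n : ℕ) (i : Fin n) (x : X),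
      Continuous fun z : Fin n → WeakDual ℝ X => z i x :=
    fun n i x => (weakdual_apply_continuous x).comp (continuous_apply i)
  set U : ∀ (n : ℕ), ℕ → ↥A → Set (Fin n → WeakDual ℝ X) :=
    fun n k a => {z | ∀ i, |z i (a : WeakSpace ℝ X) - z i p| < 1 / (k + 1)} with hUdef
  have hUopen : ∀ n k a, IsOpen (U n k a) := by
    intro n k a
    have : U n k a = ⋂ i : Fin n,
        {z : Fin n → WeakDual ℝ X | |z i (a : WeakSpace ℝ X) - z i p| < 1 / (k + 1)} := by
      ext z; simp [hUdef, Set.mem_iInter]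
    rw [this]
    exact isOpen_iInter_of_finite fun i =>
      isOpen_lt (((hcont n i _).sub (hcont n i _)).abs) continuous_const
  have key : ∀ n k : ℕ, ∃ t : Finset ↥A,
      (Set.pi univ fun _ : Fin n => Zset) ⊆ ⋃ a ∈ t, U n k a := by
    intro n k
    refine (isCompact_univ_pi fun _ => hZ).elim_finite_subcover (U n k) (hUopen n k) ?_
    intro z _
    have hkpos : (0 : ℝ) < 1 / (k + 1) := by positivity
    set W : Set (WeakSpace ℝ X) :=
      {y | ∀ i : Fin n, |WeakDual.toStrongDual (z i) y - WeakDual.toStrongDual (z i) p| < 1 / (k + 1)} with hWdef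
    have hWopen : IsOpen W := by
      have : W = ⋂ i : Fin n,
          {y : WeakSpace ℝ X |
            |WeakDual.toStrongDual (z i) y - WeakDual.toStrongDual (z i) p| < 1 / (k + 1)} := by
        ext y; simp [hWdef, Set.mem_iInter]
      rw [this]
      exact isOpen_iInter_of_finite fun i =>
        isOpen_lt (((weakspace_eval_continuous _).sub
          ((weakspace_eval_continuous _).comp continuous_const)).abs)
          continuous_const
    have hpW : p ∈ W := by
      intro i; simpa using hkpos
    obtain ⟨y, hyW, hyA⟩ := _root_.mem_closure_iff.mp hp W hWopen hpW
    exact Set.mem_iUnion.mpr ⟨⟨y, hyA⟩, fun i => hyW i⟩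
  choose t ht using key
  set A₀ : Set (WeakSpace ℝ X) :=
    ⋃ (n : ℕ) (k : ℕ), (fun a : ↥A => (a : WeakSpace ℝ X)) '' (t n k) with hA₀def
  have hA₀A : A₀ ⊆ A := by
    intro x hx
    simp only [hA₀def, mem_iUnion, mem_image] at hx
    obtain ⟨n, k, a, -, rfl⟩ := hx
    exact a.2
  have hA₀count : A₀.Countable :=
    Set.countable_iUnion fun n => Set.countable_iUnion fun k =>
      ((t n k).countable_toSet.image _)
  refine ⟨A₀, hA₀A, hA₀count, ?_⟩
  apply mem_closure_weak
  intro I ε hε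
  set M : ℝ := 1 + ∑ f ∈ I, ‖f‖ with hMdef
  have hM1 : (1 : ℝ) ≤ M := le_add_of_nonneg_right (Finset.sum_nonneg fun f _ => norm_nonneg f)
  have hM0 : (0 : ℝ) < M := lt_of_lt_of_le one_pos hM1
  have hMf : ∀ f ∈ I, ‖f‖ ≤ M := by
    intro f hf
    calc ‖f‖ ≤ ∑ g ∈ I, ‖g‖ := Finset.single_le_sum (fun g _ => norm_nonneg g) hf
    _ ≤ M := by rw [hMdef]; linarith
  obtain ⟨k, hk⟩ := exists_nat_gt (M / ε)
  have hkε : M / (k + 1) < ε := by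
    rw [div_lt_iff₀ (by positivity)]
    have h1 : M < ε * k := by
      have := (div_lt_iff₀ hε).mp hk
      linarith
    nlinarith
  set n := I.card with hn
  set eI := I.equivFin with heI
  set z : Fin n → WeakDual ℝ X :=
    fun i => StrongDual.toWeakDual (M⁻¹ • ((eI.symm i : ↥I) : X →L[ℝ] ℝ)) with hzdef
  have hzZ : z ∈ Set.pi univ fun _ : Fin n => Zset := by
    intro i _
    simp only [hZdef, mem_preimage, Metric.mem_closedBall, dist_zero_right]
    have hnorm : ‖M⁻¹ • ((eI.symm i : ↥I) : X →L[ℝ] ℝ)‖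
        = M⁻¹ * ‖((eI.symm i : ↥I) : X →L[ℝ] ℝ)‖ := by
      rw [opnorm_smul, Real.norm_eq_abs, abs_inv, abs_of_pos hM0]
    show ‖M⁻¹ • ((eI.symm i : ↥I) : X →L[ℝ] ℝ)‖ ≤ 1
    rw [hnorm]
    have := hMf _ (eI.symm i).2
    rw [inv_mul_le_iff₀ hM0]
    linarith
  obtain ⟨a, hat, hza⟩ := Set.mem_iUnion₂.mp (ht n k hzZ)
  refine ⟨(a : WeakSpace ℝ X), ?_, ?_⟩
  · simp only [hA₀def, mem_iUnion, mem_image]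
    exact ⟨n, k, a, hat, rfl⟩
  · intro f hf
    set i := eI ⟨f, hf⟩ with hi
    have hzi := hza i
    have hzi' : |M⁻¹ * f (a : WeakSpace ℝ X) - M⁻¹ * f p| < 1 / (k + 1) := by
      have hei : (eI.symm i : ↥I) = ⟨f, hf⟩ := by rw [hi, Equiv.symm_apply_apply]
      simp [hUdef, hzdef, hei, ContinuousLinearMap.smul_apply] at hzi
      rw [one_div]
      exact hzi
    have habs : f (a : WeakSpace ℝ X) - f p
        = M * (M⁻¹ * f (a : WeakSpace ℝ X) - M⁻¹ * f p) := by field_simp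
    rw [habs, abs_mul, abs_of_pos hM0]
    calc M * |M⁻¹ * f (a : WeakSpace ℝ X) - M⁻¹ * f p|
        < M * (1 / (k + 1)) := by
          exact (mul_lt_mul_iff_right₀ hM0).mpr hzi'
    _ = M / (k + 1) := by ring
    _ < ε := hkε

end Aux

theorem omega1_isLimit : Order.IsSuccLimit omega1 :=
  Cardinal.isSuccLimit_ord (Cardinal.aleph0_le_aleph 1)

/-- The top point of `[0, ω₁]`. -/
def top1 : Omega1' := ⟨omega1, Set.mem_Iic.mpr le_rfl⟩

theorem top_mem_closure_lt :
    top1 ∈ closure {a : Omega1' | (a : Ordinal) < omega1} := by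
  rw [closure_subtype]
  have himg : (Subtype.val '' {a : Omega1' | (a : Ordinal) < omega1}) = Iio omega1 := by
    ext x
    constructor
    · rintro ⟨⟨a, ha⟩, hlt, rfl⟩; exact hlt
    · intro hx; exact ⟨⟨x, Set.mem_Iic.mpr (le_of_lt hx)⟩, hx, rfl⟩
  rw [himg]
  have hcoe : (top1 : Ordinal) = omega1 := rfl
  rw [hcoe, mem_closure_iff_nhds]
  intro U hU
  obtain ⟨l, hl, hsub⟩ := exists_Ioc_subset_of_mem_nhds hU ⟨0, omega1_isLimit.pos⟩
  refine ⟨Order.succ l, hsub ⟨Order.lt_succ_of_not_isMax (not_isMax l), ?_⟩,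
    omega1_isLimit.succ_lt hl⟩
  exact (omega1_isLimit.succ_lt hl).le

/-- The ordinal interval [0,ω₁] is not Eberlein compact: it is not
homeomorphic to any weakly compact subset of a Banach space. -/
theorem omega1_interval_not_eberlein_compact (X : Type*)
    [NormedAddCommGroup X] [NormedSpace ℝ X] [CompleteSpace X]
    (K : Set (WeakSpace ℝ X)) (hK : IsCompact K) :
    ¬ Nonempty (Omega1' ≃ₜ ↥K) := by
  rintro ⟨h⟩
  classical
  set Slt : Set Omega1' := {a : Omega1' | (a : Ordinal) < omega1} with hSlt
  set q : Omega1' → WeakSpace ℝ X := fun b => ((h b : ↥K) : WeakSpace ℝ X) with hqdef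
  have hqcont : Continuous q := continuous_subtype_val.comp h.continuous
  have claim2 : q top1 ∈ closure (q '' Slt) :=
    map_mem_closure hqcont top_mem_closure_lt (mapsTo_image q Slt)
  obtain ⟨A₀, hsub, hcount, hpA₀⟩ := weak_countable_tightness claim2
  have hA₀K : A₀ ⊆ K := by
    intro x hx
    obtain ⟨b, -, rfl⟩ := hsub hx
    exact (h b).2
  -- pull the closure back into K
  set s' : Set ↥K := Subtype.val ⁻¹' A₀ with hs'def
  have hval : Subtype.val '' s' = A₀ := by
    rw [hs'def, Subtype.image_preimage_coe]
    exact inter_eq_self_of_subset_right hA₀K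
  have hp' : h top1 ∈ closure s' := by
    rw [closure_subtype, hval]
    exact hpA₀
  have htop : top1 ∈ closure (h.symm '' s') := by
    have := map_mem_closure h.symm.continuous hp' (mapsTo_image h.symm s')
    rwa [Homeomorph.symm_apply_apply] at this
  -- choose ordinal indices for the countable set A₀
  have hch : ∀ x : ↥A₀, ∃ b : Omega1', (b : Ordinal) < omega1 ∧ q b = (x : WeakSpace ℝ X) := by
    rintro ⟨x, hx⟩
    obtain ⟨b, hb, hqb⟩ := hsub hx
    exact ⟨b, hb, hqb⟩
  choose g hg1 hg2 using hch
  haveI : Countable ↥A₀ := hcount.to_subtype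
  rcases A₀.eq_empty_or_nonempty with hA₀e | hA₀ne
  · rw [hA₀e] at hpA₀
    simp at hpA₀
  haveI : Nonempty ↥A₀ := hA₀ne.to_subtype
  set C : Set Ordinal := Set.range (fun x : ↥A₀ => ((g x : Omega1') : Ordinal)) with hCdef
  have hCcount : C.Countable := Set.countable_range _
  have hCne : C.Nonempty := Set.range_nonempty _
  obtain ⟨F, hF⟩ := hCcount.exists_eq_range hCne
  set γ : Ordinal := ⨆ n : ℕ, F n with hγdef
  have hγlt' : (⨆ n : ℕ, F n) < (Cardinal.aleph 1).ord := by
    refine Cardinal.iSup_lt_ord_lift_of_isRegular (f := F) Cardinal.isRegular_aleph_one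
      (by rw [Cardinal.mk_nat, Cardinal.lift_aleph0]; exact Cardinal.aleph0_lt_aleph_one) ?_
    intro m
    have hm : F m ∈ C := by rw [hF]; exact Set.mem_range_self m
    obtain ⟨x, hx⟩ := hm
    rw [← hx]
    exact hg1 x
  have hγlt : γ < omega1 := hγlt'
  have hboundT : ∀ b ∈ h.symm '' s', (b : Ordinal) ≤ γ := by
    rintro b ⟨y, hy, rfl⟩
    have hyA₀ : (y : WeakSpace ℝ X) ∈ A₀ := hy
    set x : ↥A₀ := ⟨(y : WeakSpace ℝ X), hyA₀⟩ with hx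
    have hqg : q (g x) = (y : WeakSpace ℝ X) := hg2 x
    have hgy : h (g x) = y := Subtype.coe_injective hqg
    have hgb : g x = h.symm y := by rw [← hgy, Homeomorph.symm_apply_apply]
    rw [← hgb]
    have hmem : ((g x : Omega1') : Ordinal) ∈ C := Set.mem_range_self x
    rw [hF] at hmem
    obtain ⟨m, hm⟩ := hmem
    rw [← hm]
    exact Ordinal.le_iSup F m
  -- contradiction: (γ, ω₁] is an open neighbourhood of top1 missing h.symm '' s'
  have hO : IsOpen {b : Omega1' | γ < (b : Ordinal)} :=
    (isOpen_Ioi (a := γ)).preimage continuous_subtype_val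
  have htopO : top1 ∈ {b : Omega1' | γ < (b : Ordinal)} := hγlt
  obtain ⟨b, hbO, hbT⟩ := _root_.mem_closure_iff.mp htop _ hO htopO
  exact absurd (hboundT b hbT) (not_le.mpr hbO)

end
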